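/- (Reduction of two-terminal bounded-treewidth graphs.) Let G be a finite simple graph on n ≥ 2 vertices of treewidth at most w, and let s ≠ d be two terminal vertices of G. Then there is an ordering v₁, …, v_{n−2} of the vertices of G other than s and d such that, setting G₀ = G and letting G_i be the star-mesh elimination of v_i from G_{i−1} for i = 1, …, n−2, the degree of v_i in G_{i−1} is at most w + 1 for every i; the final graph G_{n−2} has vertex set {s, d}. -/

import Mathlib

/-- `(T, X)` is a tree decomposition of the graph `G`: `T` is a tree on the index set,
every vertex is in some bag, every edge of `G` has both ends in some bag, and for every
vertex the set of bags containing it induces a connected subgraph of `T`. -/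
structure IsTreeDecomp {V I : Type*} (G : SimpleGraph V) (T : SimpleGraph I)
    (X : I → Finset V) : Prop where
  isTree : T.IsTree
  mem_bag : ∀ v : V, ∃ i, v ∈ X i
  edge_bag : ∀ u v : V, G.Adj u v → ∃ i, u ∈ X i ∧ v ∈ X i
  support_connected : ∀ v : V, (T.induce {i | v ∈ X i}).Connected

/-- A tree decomposition is nice if adjacent bags are equal or differ by exactly one
vertex. -/
def IsNice {V I : Type*} [DecidableEq V] (T : SimpleGraph I) (X : I → Finset V) : Prop :=
  ∀ i j : I, T.Adj i j →
    X i = X j ∨ (∃ v ∉ X j, X i = insert v (X j)) ∨ (∃ v ∉ X i, X j = insert v (X i))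

/-- The graph `G` has treewidth at most `w`: it admits a tree decomposition all of whose
bags have at most `w + 1` vertices. -/
def TreewidthLE {V : Type*} (G : SimpleGraph V) (w : ℕ) : Prop :=
  ∃ (I : Type) (_ : Fintype I) (T : SimpleGraph I) (X : I → Finset V),
    IsTreeDecomp G T X ∧ ∀ i, (X i).card ≤ w + 1

/-- The star-mesh elimination of the vertex `v` from `G`, realized on the same ambient
vertex type: the eliminated vertex `v` becomes isolated (i.e. is removed from the vertex
set of the graph), and two remaining distinct vertices are adjacent iff they were
adjacent in `G` or were both `G`-neighbors of `v`. -/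
def starMeshElim {V : Type*} (G : SimpleGraph V) (v : V) : SimpleGraph V where
  Adj x y := x ≠ y ∧ x ≠ v ∧ y ≠ v ∧ (G.Adj x y ∨ (G.Adj x v ∧ G.Adj y v))
  symm := ⟨by
    rintro x y ⟨hxy, hxv, hyv, h⟩
    exact ⟨hxy.symm, hyv, hxv, h.imp (fun h' => h'.symm) fun h' => ⟨h'.2, h'.1⟩⟩⟩
  loopless := ⟨fun x h => h.1 rfl⟩

open SimpleGraph

namespace TreeRed

variable {I : Type*} {T : SimpleGraph I}

/-- any path in a tree has length equal to dist -/
lemma path_length_eq (hT : T.IsTree) {a b : I} (p : T.Walk a b) (hp : p.IsPath) :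
    p.length = T.dist a b := by
  obtain ⟨q, hq, hlen⟩ := (p.reachable).exists_path_of_dist
  have : (⟨p, hp⟩ : T.Path a b) = ⟨q, hq⟩ := hT.IsAcyclic.path_unique _ _
  rw [show p = q from congrArg Subtype.val this, hlen]

lemma exists_path (hT : T.IsTree) (a b : I) :
    ∃ p : T.Walk a b, p.IsPath ∧ p.length = T.dist a b :=
  (hT.isConnected a b).exists_path_of_dist

/-- membership in a path gives a dist identity -/
lemma dist_add_of_mem_support (hT : T.IsTree) {a b z : I} (p : T.Walk a b) (hp : p.IsPath)
    (hz : z ∈ p.support) : T.dist a z + T.dist z b = T.dist a b := by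
  classical
  have h1 := path_length_eq hT _ (hp.takeUntil hz)
  have h2 := path_length_eq hT _ (hp.dropUntil hz)
  have h3 : (p.takeUntil z hz).length + (p.dropUntil z hz).length = p.length := by
    rw [← SimpleGraph.Walk.length_append, p.take_spec hz]
  rw [← h1, ← h2, h3, path_length_eq hT p hp]

/-- dist identity gives membership in THE path -/
lemma mem_support_of_dist (hT : T.IsTree) {a b z : I} (p : T.Walk a b) (hp : p.IsPath)
    (h : T.dist a z + T.dist z b = T.dist a b) : z ∈ p.support := by
  obtain ⟨q1, hq1, hl1⟩ := exists_path hT a z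
  obtain ⟨q2, hq2, hl2⟩ := exists_path hT z b
  have hw : (q1.append q2).length = T.dist a b := by
    rw [SimpleGraph.Walk.length_append, hl1, hl2, h]
  have hwp : (q1.append q2).IsPath := SimpleGraph.Walk.isPath_of_length_eq_dist _ hw
  have : (⟨q1.append q2, hwp⟩ : T.Path a b) = ⟨p, hp⟩ := hT.IsAcyclic.path_unique _ _
  have hmem : z ∈ (q1.append q2).support := by
    rw [SimpleGraph.Walk.mem_support_append_iff]
    exact Or.inl q1.end_mem_support
  rwa [show q1.append q2 = p from congrArg Subtype.val this] at hmem

lemma concat_isPath {a b c : I} (p : T.Walk a b) (hp : p.IsPath) (h : T.Adj b c)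
    (hc : c ∉ p.support) : (p.concat h).IsPath := by
  rw [← SimpleGraph.Walk.isPath_reverse_iff, SimpleGraph.Walk.reverse_concat]
  rw [SimpleGraph.Walk.cons_isPath_iff, SimpleGraph.Walk.isPath_reverse_iff]
  exact ⟨hp, by rwa [SimpleGraph.Walk.support_reverse, List.mem_reverse]⟩

/-- in a tree, adjacent vertices have different distances to any root -/
lemma adj_dist_ne (hT : T.IsTree) (r : I) {y y' : I} (h : T.Adj y y') :
    T.dist r y ≠ T.dist r y' := by
  intro heq
  obtain ⟨p, hp, hl⟩ := exists_path hT r y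
  have hy' : y' ∉ p.support := by
    intro hmem
    have := dist_add_of_mem_support hT p hp hmem
    have hne : T.dist y' y ≠ 0 := by
      rw [SimpleGraph.dist_ne_zero_iff_ne_and_reachable]
      exact ⟨fun he => T.irrefl (he ▸ h), h.symm.reachable⟩
    omega
  have hq : (p.concat h).IsPath := concat_isPath p hp h hy'
  have := path_length_eq hT _ hq
  rw [SimpleGraph.Walk.length_concat, hl, heq] at this
  omega

/-- in a tree, a vertex has at most one neighbor strictly closer to the root -/
lemma two_parents (hT : T.IsTree) (r : I) {y y1 y2 : I} (h1 : T.Adj y y1) (h2 : T.Adj y y2)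
    (hd1 : T.dist r y1 + 1 = T.dist r y) (hd2 : T.dist r y2 + 1 = T.dist r y) : y1 = y2 := by
  classical
  obtain ⟨p1, hp1, hl1⟩ := exists_path hT r y1
  obtain ⟨p2, hp2, hl2⟩ := exists_path hT r y2
  have hy1 : y ∉ p1.support := fun hmem => by
    have := dist_add_of_mem_support hT p1 hp1 hmem; omega
  have hy2 : y ∉ p2.support := fun hmem => by
    have := dist_add_of_mem_support hT p2 hp2 hmem; omega
  have hq1 : (p1.concat h1.symm).IsPath := concat_isPath p1 hp1 h1.symm hy1
  have hq2 : (p2.concat h2.symm).IsPath := concat_isPath p2 hp2 h2.symm hy2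
  have heq : p1.concat h1.symm = p2.concat h2.symm := by
    have := hT.IsAcyclic.path_unique (⟨p1.concat h1.symm, hq1⟩ : T.Path r y)
      ⟨p2.concat h2.symm, hq2⟩
    exact congrArg Subtype.val this
  have := congrArg (fun w : T.Walk r y => w.reverse.getVert 1) heq
  simpa [SimpleGraph.Walk.reverse_concat, SimpleGraph.Walk.getVert_cons_succ] using this

lemma getVert_injOn {a b : I} (p : T.Walk a b) (hp : p.IsPath) :
    ∀ j k, j ≤ p.length → k ≤ p.length → p.getVert j = p.getVert k → j = k := by
  induction p with
  | nil => intro j k hj hk _; simp only [SimpleGraph.Walk.length_nil] at hj hk; omega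
  | cons h q ih =>
    rename_i u v w
    intro j k hj hk heq
    rw [SimpleGraph.Walk.cons_isPath_iff] at hp
    match j, k with
    | 0, 0 => rfl
    | 0, k + 1 =>
      exfalso
      rw [SimpleGraph.Walk.getVert_zero, SimpleGraph.Walk.getVert_cons_succ] at heq
      exact hp.2 (by
        rw [SimpleGraph.Walk.mem_support_iff_exists_getVert]
        exact ⟨k, heq.symm, by simpa using hk⟩)
    | j + 1, 0 =>
      exfalso
      rw [SimpleGraph.Walk.getVert_zero, SimpleGraph.Walk.getVert_cons_succ] at heq
      exact hp.2 (by
        rw [SimpleGraph.Walk.mem_support_iff_exists_getVert]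
        exact ⟨j, heq, by simpa using hj⟩)
    | j + 1, k + 1 =>
      rw [SimpleGraph.Walk.getVert_cons_succ, SimpleGraph.Walk.getVert_cons_succ] at heq
      have := ih hp.1 j k (by simpa using hj) (by simpa using hk) heq
      omega

lemma gate_along (hT : T.IsTree) (r : I) {t z : I} (Q : T.Walk t z) (hQ : Q.IsPath)
    (hmin : ∀ y ∈ Q.support, T.dist r t ≤ T.dist r y) :
    ∀ k, k ≤ Q.length → T.dist r (Q.getVert k) = T.dist r t + k := by
  intro k
  induction k using Nat.strong_induction_on with
  | _ k ih =>
    intro hk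
    rcases k with _ | k
    · simp
    ·
      have ihk : T.dist r (Q.getVert k) = T.dist r t + k := ih k (by omega) (by omega)
      have hadj : T.Adj (Q.getVert k) (Q.getVert (k + 1)) := Q.adj_getVert_succ (by omega)
      have hzmem : Q.getVert (k+1) ∈ Q.support := by
        rw [SimpleGraph.Walk.mem_support_iff_exists_getVert]; exact ⟨k+1, rfl, hk⟩
      have hne := adj_dist_ne hT r hadj
      have hd1 : T.dist (Q.getVert k) (Q.getVert (k+1)) = 1 := by
        rwa [SimpleGraph.dist_eq_one_iff_adj]
      have htri1 := hT.isConnected.dist_triangle (u := r) (v := Q.getVert k)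
        (w := Q.getVert (k+1))
      have htri2 := hT.isConnected.dist_triangle (u := r) (v := Q.getVert (k+1))
        (w := Q.getVert k)
      rw [hd1] at htri1
      rw [SimpleGraph.dist_comm (u := Q.getVert (k+1))] at htri2
      rw [hd1] at htri2
      rcases Nat.lt_or_ge (T.dist r (Q.getVert (k+1))) (T.dist r (Q.getVert k)) with hlt | hge
      · exfalso
        have hdz : T.dist r (Q.getVert (k+1)) + 1 = T.dist r (Q.getVert k) := by omega
        by_cases hk0 : k = 0
        · subst hk0
          have := hmin _ hzmem
          simp only [SimpleGraph.Walk.getVert_zero] at hdz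
          omega
        · have hk1 : k - 1 + 1 = k := by omega
          have ihp : T.dist r (Q.getVert (k-1)) = T.dist r t + (k-1) :=
            ih (k-1) (by omega) (by omega)
          have hadj' : T.Adj (Q.getVert k) (Q.getVert (k-1)) := by
            have := Q.adj_getVert_succ (i := k-1) (by omega)
            rw [hk1] at this
            exact this.symm
          have e1 : T.dist r (Q.getVert (k-1)) + 1 = T.dist r (Q.getVert k) := by omega
          have heq2 : Q.getVert (k-1) = Q.getVert (k+1) :=
            two_parents hT r hadj' hadj e1 hdz
          have := getVert_injOn Q hQ (k-1) (k+1) (by omega) (by omega) heq2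
          omega
      · omega



/-- extract a path in `T` with support inside a set from connectivity of the induced graph -/
lemma exists_path_subset {B : Set I} (hB : (T.induce B).Connected) {t z : I}
    (ht : t ∈ B) (hz : z ∈ B) :
    ∃ p : T.Walk t z, p.IsPath ∧ ∀ y ∈ p.support, y ∈ B := by
  classical
  obtain ⟨w⟩ := hB ⟨t, ht⟩ ⟨z, hz⟩
  let f : T.induce B →g T := ⟨Subtype.val, fun {a b} h => h⟩
  have hsup : ∀ y ∈ (w.map f).support, y ∈ B := by
    intro y hy
    rw [SimpleGraph.Walk.support_map, List.mem_map] at hy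
    obtain ⟨⟨y', hy'⟩, _, rfl⟩ := hy
    exact hy'
  exact ⟨(w.map f).bypass, SimpleGraph.Walk.bypass_isPath _,
    fun y hy => hsup y (SimpleGraph.Walk.support_bypass_subset _ hy)⟩

/-- the gate lemma: distances from the root to vertices of a connected induced subgraph
decompose through the closest vertex -/
lemma gate (hT : T.IsTree) (r : I) {B : Set I} (hB : (T.induce B).Connected) {t z : I}
    (ht : t ∈ B) (hz : z ∈ B) (hmin : ∀ y ∈ B, T.dist r t ≤ T.dist r y) :
    T.dist r z = T.dist r t + T.dist t z := by
  obtain ⟨Q, hQ, hsub⟩ := exists_path_subset hB ht hz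
  have hlen := path_length_eq hT Q hQ
  have := gate_along hT r Q hQ (fun y hy => hmin y (hsub y hy)) Q.length le_rfl
  rwa [SimpleGraph.Walk.getVert_length, hlen] at this

/-- Key lemma: if connected sets `A`, `B` intersect and the closest vertex of `A` to the
root is at most as far as the closest vertex `t` of `B`, then `t ∈ A`. -/
lemma key (hT : T.IsTree) (r : I) {A B : Set I} (hA : (T.induce A).Connected)
    (hB : (T.induce B).Connected) {x a t : I} (hxA : x ∈ A) (hxB : x ∈ B)
    (haA : a ∈ A) (hamin : ∀ y ∈ A, T.dist r a ≤ T.dist r y)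
    (htB : t ∈ B) (htmin : ∀ y ∈ B, T.dist r t ≤ T.dist r y)
    (hle : T.dist r a ≤ T.dist r t) : t ∈ A := by
  have g1 : T.dist r x = T.dist r t + T.dist t x := gate hT r hB htB hxB htmin
  have g2 : T.dist r x = T.dist r a + T.dist a x := gate hT r hA haA hxA hamin
  have hc1 : T.dist t x = T.dist x t := SimpleGraph.dist_comm
  have hc2 : T.dist a x = T.dist x a := SimpleGraph.dist_comm
  have hc3 : T.dist x r = T.dist r x := SimpleGraph.dist_comm
  have hc4 : T.dist t r = T.dist r t := SimpleGraph.dist_comm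
  have hc5 : T.dist a r = T.dist r a := SimpleGraph.dist_comm
  have hc6 : T.dist t a = T.dist a t := SimpleGraph.dist_comm
  obtain ⟨Pxt, hPxt, hlxt⟩ := exists_path hT x t
  obtain ⟨Ptr, hPtr, hltr⟩ := exists_path hT t r
  have hlen : (Pxt.append Ptr).length = T.dist x r := by
    rw [SimpleGraph.Walk.length_append, hlxt, hltr]; omega
  have hP : (Pxt.append Ptr).IsPath := SimpleGraph.Walk.isPath_of_length_eq_dist _ hlen
  have haP : a ∈ (Pxt.append Ptr).support := by
    apply mem_support_of_dist hT _ hP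
    omega
  rw [SimpleGraph.Walk.mem_support_append_iff] at haP
  rcases haP with haP | haP
  · -- a on the path from x to t, so t = a
    have hxa := dist_add_of_mem_support hT Pxt hPxt haP
    have h0 : T.dist t a = 0 := by omega
    have hta : t = a := ((hT.isConnected t a).dist_eq_zero_iff).mp h0
    rw [hta]; exact haA
  · -- a on the path from t to r
    have hta := dist_add_of_mem_support hT Ptr hPtr haP
    have key_eq : T.dist x t + T.dist t a = T.dist x a := by omega
    obtain ⟨PxaA, hPxaA, hsubA⟩ := exists_path_subset hA hxA haA
    exact hsubA t (mem_support_of_dist hT PxaA hPxaA key_eq)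

end TreeRed

section Main

variable {V : Type*} [Fintype V] [DecidableEq V]

/-- The invariant carried through the elimination process. -/
def ElimInv (w : ℕ) (s d : V) (G : SimpleGraph V) (S : Finset V) : Prop :=
  ∃ (I : Type) (_ : Fintype I) (T : SimpleGraph I) (X : I → Finset V) (r : I),
    T.IsTree ∧ s ∈ X r ∧ (∀ i, d ∈ X i) ∧ (∀ i, (X i).card ≤ w + 2) ∧
    (∀ v ∈ S, ∃ i, v ∈ X i) ∧ (∀ u v, G.Adj u v → ∃ i, u ∈ X i ∧ v ∈ X i) ∧
    (∀ v ∈ S, (T.induce {i | v ∈ X i}).Connected)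

lemma step {w : ℕ} {s d : V} {G : SimpleGraph V} {S : Finset V}
    (hs : s ∈ S) (hd : d ∈ S)
    (hedge : ∀ x y, G.Adj x y → x ∈ S ∧ y ∈ S) (hinv : ElimInv w s d G S)
    (hne : ∃ v ∈ S, v ≠ s ∧ v ≠ d) :
    ∃ v ∈ S, v ≠ s ∧ v ≠ d ∧ (G.neighborSet v).ncard ≤ w + 1 ∧
      ElimInv w s d (starMeshElim G v) (S.erase v) ∧
      (∀ x y, (starMeshElim G v).Adj x y → x ∈ S.erase v ∧ y ∈ S.erase v) := by
  classical
  obtain ⟨I, fI, T, X, r, hT, hsr, hdall, hcard, hmem, hedgebag, hconn⟩ := hinv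
  -- the min distance from the root over the support of a vertex
  set m : V → ℕ := fun u => sInf ((fun i => T.dist r i) '' {i | u ∈ X i}) with hm
  have hmin_spec : ∀ u : V, (∃ i, u ∈ X i) →
      ∃ i, u ∈ X i ∧ T.dist r i = m u ∧ ∀ j, u ∈ X j → T.dist r i ≤ T.dist r j := by
    intro u ⟨i0, hi0⟩
    have hne' : ((fun i => T.dist r i) '' {i | u ∈ X i}).Nonempty := ⟨_, ⟨i0, hi0, rfl⟩⟩
    obtain ⟨i, hi, hieq⟩ := Nat.sInf_mem hne'
    refine ⟨i, hi, hieq, fun j hj => ?_⟩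
    calc T.dist r i = m u := hieq
      _ ≤ T.dist r j := Nat.sInf_le ⟨j, hj, rfl⟩
  -- choose a candidate maximizing m
  have hCne : ((S.erase d).erase s).Nonempty := by
    obtain ⟨v, hvS, hvs, hvd⟩ := hne
    exact ⟨v, by simp [Finset.mem_erase, hvs, hvd, hvS]⟩
  obtain ⟨v, hvC, hvmax⟩ := Finset.exists_max_image ((S.erase d).erase s) m hCne
  have hvS : v ∈ S := (Finset.mem_erase.mp (Finset.mem_erase.mp hvC).2).2
  have hvs : v ≠ s := (Finset.mem_erase.mp hvC).1
  have hvd : v ≠ d := (Finset.mem_erase.mp (Finset.mem_erase.mp hvC).2).1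
  obtain ⟨t, hvt, hteq, htmin⟩ := hmin_spec v (hmem v hvS)
  -- every neighbor of v lies in the bag X t
  have hN : ∀ u, G.Adj u v → u ∈ X t := by
    intro u hadj
    have huS : u ∈ S := (hedge u v hadj).1
    by_cases hud : u = d
    · exact hud ▸ hdall t
    obtain ⟨x, hxu, hxv⟩ := hedgebag u v hadj
    obtain ⟨a, hua, haeq, hamin⟩ := hmin_spec u ⟨x, hxu⟩
    have hle : T.dist r a ≤ T.dist r t := by
      by_cases hus : u = s
      · subst hus
        have := hamin r hsr
        -- dist r a ≤ dist r r = 0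
        have h0 : T.dist r r = 0 := SimpleGraph.dist_self
        omega
      · have huC : u ∈ (S.erase d).erase s := by
          simp [Finset.mem_erase, hus, hud, huS]
        have := hvmax u huC
        rw [haeq, hteq]
        exact this
    exact TreeRed.key hT r (hconn u huS) (hconn v hvS) hxu hxv hua
      (fun y hy => hamin y hy) hvt (fun y hy => htmin y hy) hle
  -- degree bound
  have hdeg : (G.neighborSet v).ncard ≤ w + 1 := by
    have hsub : G.neighborSet v ⊆ ↑((X t).erase v) := by
      intro u hu
      have : G.Adj u v := hu.symm
      simp only [Finset.coe_erase, Set.mem_diff, Set.mem_singleton_iff]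
      exact ⟨hN u this, fun he => G.irrefl (he ▸ hu)⟩
    calc (G.neighborSet v).ncard ≤ (↑((X t).erase v) : Set V).ncard :=
          Set.ncard_le_ncard hsub ((X t).erase v).finite_toSet
      _ = ((X t).erase v).card := Set.ncard_coe_finset _
      _ = (X t).card - 1 := Finset.card_erase_of_mem hvt
      _ ≤ w + 1 := by have := hcard t; omega
  refine ⟨v, hvS, hvs, hvd, hdeg, ?_, ?_⟩
  · -- the new invariant
    refine ⟨I, fI, T, fun i => (X i).erase v, r, hT, ?_, ?_, ?_, ?_, ?_, ?_⟩
    · exact Finset.mem_erase.mpr ⟨fun h => hvs h.symm, hsr⟩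
    · exact fun i => Finset.mem_erase.mpr ⟨fun h => hvd h.symm, hdall i⟩
    · exact fun i => le_trans (Finset.card_erase_le) (hcard i)
    · intro u hu
      rw [Finset.mem_erase] at hu
      obtain ⟨i, hi⟩ := hmem u hu.2
      exact ⟨i, Finset.mem_erase.mpr ⟨hu.1, hi⟩⟩
    · rintro x y ⟨hxy, hxv, hyv, hor⟩
      rcases hor with h | ⟨h1, h2⟩
      · obtain ⟨i, hxi, hyi⟩ := hedgebag x y h
        exact ⟨i, Finset.mem_erase.mpr ⟨hxv, hxi⟩, Finset.mem_erase.mpr ⟨hyv, hyi⟩⟩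
      · exact ⟨t, Finset.mem_erase.mpr ⟨hxv, hN x h1⟩, Finset.mem_erase.mpr ⟨hyv, hN y h2⟩⟩
    · intro u hu
      rw [Finset.mem_erase] at hu
      have hset : {i | u ∈ (X i).erase v} = {i | u ∈ X i} := by
        ext i; simp [Finset.mem_erase, hu.1]
      rw [hset]
      exact hconn u hu.2
  · -- edges of the new graph stay inside S.erase v
    rintro x y ⟨hxy, hxv, hyv, hor⟩
    rcases hor with h | ⟨h1, h2⟩
    · exact ⟨Finset.mem_erase.mpr ⟨hxv, (hedge x y h).1⟩,
        Finset.mem_erase.mpr ⟨hyv, (hedge x y h).2⟩⟩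
    · exact ⟨Finset.mem_erase.mpr ⟨hxv, (hedge x v h1).1⟩,
        Finset.mem_erase.mpr ⟨hyv, (hedge y v h2).1⟩⟩


lemma main {w : ℕ} {s d : V} (hsd : s ≠ d) :
    ∀ (k : ℕ) (G : SimpleGraph V) (S : Finset V), (S \ {s, d}).card = k → s ∈ S → d ∈ S →
    (∀ x y, G.Adj x y → x ∈ S ∧ y ∈ S) → ElimInv w s d G S →
    ∃ l : List V, l.Nodup ∧ (∀ v, v ∈ l ↔ v ∈ S ∧ v ≠ s ∧ v ≠ d) ∧
      (∀ i : Fin l.length,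
        (((l.take i).foldl starMeshElim G).neighborSet (l.get i)).ncard ≤ w + 1) ∧
      (∀ x y, (l.foldl starMeshElim G).Adj x y → (x = s ∨ x = d) ∧ (y = s ∨ y = d)) := by
  intro k
  induction k with
  | zero =>
    intro G S hcard hs hd hedge hinv
    refine ⟨[], List.nodup_nil, ?_, fun i => i.elim0, ?_⟩
    · intro v
      simp only [List.not_mem_nil, false_iff]
      rintro ⟨hvS, hvs, hvd⟩
      have : v ∈ S \ {s, d} := by
        simp [Finset.mem_sdiff, hvS, hvs, hvd]
      rw [Finset.card_eq_zero.mp hcard] at this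
      exact absurd this (Finset.notMem_empty v)
    · intro x y hxy
      have hsub : S ⊆ {s, d} := by
        rwa [← Finset.sdiff_eq_empty_iff_subset, ← Finset.card_eq_zero]
      have hx := hsub (hedge x y hxy).1
      have hy := hsub (hedge x y hxy).2
      simp only [Finset.mem_insert, Finset.mem_singleton] at hx hy
      exact ⟨hx, hy⟩
  | succ k ih =>
    intro G S hcard hs hd hedge hinv
    have hne : ∃ v ∈ S, v ≠ s ∧ v ≠ d := by
      have : (S \ {s, d}).Nonempty := by
        rw [← Finset.card_pos, hcard]; omega
      obtain ⟨v, hv⟩ := this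
      rw [Finset.mem_sdiff, Finset.mem_insert, Finset.mem_singleton] at hv
      exact ⟨v, hv.1, fun h => hv.2 (Or.inl h), fun h => hv.2 (Or.inr h)⟩
    obtain ⟨v, hvS, hvs, hvd, hdeg, hinv', hedge'⟩ := step hs hd hedge hinv hne
    have hsd' : (S.erase v \ {s, d}) = (S \ {s, d}).erase v := by
      ext x
      simp only [Finset.mem_sdiff, Finset.mem_erase, Finset.mem_insert, Finset.mem_singleton]
      tauto
    have hcard' : (S.erase v \ {s, d}).card = k := by
      have hvmem : v ∈ S \ {s, d} := by
        simp only [Finset.mem_sdiff, Finset.mem_insert, Finset.mem_singleton]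
        exact ⟨hvS, by tauto⟩
      rw [hsd', Finset.card_erase_of_mem hvmem, hcard]
      omega
    obtain ⟨l', hnd', hmem', hdeg', hfin'⟩ := ih (starMeshElim G v) (S.erase v) hcard'
      (Finset.mem_erase.mpr ⟨fun h => hvs h.symm, hs⟩)
      (Finset.mem_erase.mpr ⟨fun h => hvd h.symm, hd⟩)
      hedge' hinv'
    refine ⟨v :: l', ?_, ?_, ?_, ?_⟩
    · refine List.nodup_cons.mpr ⟨?_, hnd'⟩
      intro hv
      have := (hmem' v).mp hv
      exact (Finset.mem_erase.mp this.1).1 rfl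
    · intro u
      simp only [List.mem_cons, hmem' u, Finset.mem_erase]
      constructor
      · rintro (rfl | ⟨⟨_, huS⟩, hus, hud⟩)
        · exact ⟨hvS, hvs, hvd⟩
        · exact ⟨huS, hus, hud⟩
      · rintro ⟨huS, hus, hud⟩
        by_cases huv : u = v
        · exact Or.inl huv
        · exact Or.inr ⟨⟨huv, huS⟩, hus, hud⟩
    · intro i
      refine Fin.cases ?_ ?_ i
      · simpa using hdeg
      · intro j
        have h1 : ((v :: l').take (j.succ : ℕ)) = v :: l'.take (j : ℕ) := rfl
        have h2 : (v :: l').get j.succ = l'.get j := rfl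
        rw [h1, h2, List.foldl_cons]
        exact hdeg' j
    · intro x y hxy
      rw [List.foldl_cons] at hxy
      exact hfin' x y hxy

end Main


/-- Reduction of two-terminal bounded-treewidth graphs: if `G` has `n ≥ 2` vertices and
treewidth at most `w`, and `s ≠ d` are two terminals, then the vertices other than `s`
and `d` can be ordered so that successive star-mesh eliminations in that order always
eliminate a vertex of current degree at most `w + 1`; the final graph has vertex set
`{s, d}` (all other vertices having been eliminated, i.e. isolated). -/
theorem reduction_of_bounded_treewidth {V : Type*} [Fintype V] [DecidableEq V]
    (G : SimpleGraph V) (n w : ℕ) (hn : Fintype.card V = n) (h2 : 2 ≤ n)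
    (htw : TreewidthLE G w) (s d : V) (hsd : s ≠ d) :
    ∃ l : List V, l.Nodup ∧ (∀ v : V, v ∈ l ↔ v ≠ s ∧ v ≠ d) ∧
      (∀ i : Fin l.length,
        (((l.take i).foldl starMeshElim G).neighborSet (l.get i)).ncard ≤ w + 1) ∧
      (∀ x y : V, (l.foldl starMeshElim G).Adj x y →
        (x = s ∨ x = d) ∧ (y = s ∨ y = d)) := by
  classical
  obtain ⟨I, fI, T, X, hdec, hbags⟩ := htw
  obtain ⟨r, hr⟩ := hdec.mem_bag s
  have hinv : ElimInv w s d G Finset.univ := by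
    refine ⟨I, fI, T, fun i => insert d (X i), r, hdec.isTree,
      Finset.mem_insert_of_mem hr, fun i => Finset.mem_insert_self d (X i), ?_, ?_, ?_, ?_⟩
    · intro i
      exact le_trans (Finset.card_insert_le d (X i)) (by have := hbags i; omega)
    · intro v _
      obtain ⟨i, hi⟩ := hdec.mem_bag v
      exact ⟨i, Finset.mem_insert_of_mem hi⟩
    · intro u v' huv
      obtain ⟨i, h1, h2⟩ := hdec.edge_bag u v' huv
      exact ⟨i, Finset.mem_insert_of_mem h1, Finset.mem_insert_of_mem h2⟩
    · intro v' _
      by_cases hvd : v' = d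
      · have hset : {i | v' ∈ insert d (X i)} = Set.univ := by ext i; simp [hvd]
        rw [hset]
        exact (SimpleGraph.Iso.connected_iff (SimpleGraph.induceUnivIso T)).mpr
          hdec.isTree.isConnected
      · have hset : {i | v' ∈ insert d (X i)} = {i | v' ∈ X i} := by
          ext i; simp [Finset.mem_insert, hvd]
        rw [hset]
        exact hdec.support_connected v'
  obtain ⟨l, hnd, hmem, hdeg, hfin⟩ := main hsd (Finset.univ \ {s, d}).card G Finset.univ rfl
    (Finset.mem_univ s) (Finset.mem_univ d)
    (fun x y _ => ⟨Finset.mem_univ x, Finset.mem_univ y⟩) hinv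
  exact ⟨l, hnd, fun v => by simpa using hmem v, hdeg, hfin⟩
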